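/- Let (X, ‖·‖) be a real normed space whose unit ball is strictly convex and whose norm p(x) = ‖x‖ is Gâteaux differentiable at every x ≠ 0, i.e., for every x ≠ 0 there is a continuous linear functional p'(x) with lim_{t→0⁺} (‖x + th‖ − ‖x‖)/t = p'(x)(h) for all h ∈ X. Let D ⊆ X be a convex set and ω : D → ℝ positive-valued. Then F(u,v) := ω(u)‖v − u‖² satisfies property (F): for each u ∈ D, the function F_u = F(u,·) is strictly convex on D, relatively Gâteaux differentiable on D with F'_u(v) = 2ω(u)‖v − u‖ p'(v − u) for v ≠ u, and F'_u(u) = 0. -/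

import Mathlib

open Filter Topology

set_option maxHeartbeats 1000000 in
/-- In a normed space with strictly convex unit ball and Gâteaux
differentiable norm, `F(u,v) := ω(u)‖v − u‖²` satisfies property (F), with
`F'_u(v) = 2ω(u)‖v − u‖ p'(v − u)` for `v ≠ u` and `F'_u(u) = 0`. -/
theorem weighted_norm_square_satisfies_propertyF
    {X : Type*} [NormedAddCommGroup X] [NormedSpace ℝ X]
    (hball : ∀ x y : X, ‖x‖ = 1 → ‖y‖ = 1 → x ≠ y →
      ∀ t ∈ Set.Ioo (0 : ℝ) 1, ‖t • x + (1 - t) • y‖ < 1)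
    (p' : X → X →L[ℝ] ℝ)
    (hp' : ∀ x : X, x ≠ 0 → ∀ h : X,
      Tendsto (fun t : ℝ => (‖x + t • h‖ - ‖x‖) / t) (𝓝[>] 0) (𝓝 (p' x h)))
    (D : Set X) (hDconv : Convex ℝ D)
    (ω : X → ℝ) (hω : ∀ u ∈ D, 0 < ω u)
    (u : X) (hu : u ∈ D) :
    StrictConvexOn ℝ D (fun v => ω u * ‖v - u‖ ^ 2) ∧
    ∃ F' : X → X →L[ℝ] ℝ,
      (∀ v ∈ D, ∀ w ∈ D,
        Tendsto (fun t : ℝ =>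
            (ω u * ‖v + t • (w - v) - u‖ ^ 2 - ω u * ‖v - u‖ ^ 2) / t)
          (𝓝[>] 0) (𝓝 (F' v (w - v)))) ∧
      (∀ v ∈ D, v ≠ u → F' v = (2 * ω u * ‖v - u‖) • p' (v - u)) ∧
      F' u = 0 := by
  have hscs : StrictConvexSpace ℝ X :=
    StrictConvexSpace.of_norm_combo_lt_one fun x y hx hy hne =>
      ⟨1 / 2, 1 / 2, by norm_num, by
        have := hball x y hx hy hne (1 / 2) (by norm_num)
        norm_num at this ⊢
        convert this using 3 <;> norm_num⟩
  have hωu : 0 < ω u := hω u hu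
  constructor
  · -- strict convexity
    refine ⟨hDconv, fun x hx y hy hxy a b ha hb hab => ?_⟩
    have h1 : a • x + b • y - u = a • (x - u) + b • (y - u) := by
      have hu1 : u = (a + b) • u := by rw [hab, one_smul]
      calc a • x + b • y - u = a • x + b • y - (a + b) • u := by rw [← hu1]
        _ = a • (x - u) + b • (y - u) := by
            rw [add_smul, smul_sub, smul_sub]; abel
    simp only [smul_eq_mul]
    rw [h1]
    set A := ‖x - u‖ with hA
    set B := ‖y - u‖ with hB
    set C := ‖a • (x - u) + b • (y - u)‖ with hC
    have hCnn : 0 ≤ C := norm_nonneg _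
    have hne : x - u ≠ y - u := fun h => hxy (by
      have := congrArg (· + u) h; simpa using this)
    have key : C ^ 2 < a * A ^ 2 + b * B ^ 2 := by
      by_cases hAB : A = B
      · have hlt : C < A := by
          refine norm_combo_lt_of_ne (le_refl _) ?_ hne ha hb hab
          exact hAB.ge
        have hApos : 0 < A := lt_of_le_of_lt hCnn hlt
        have : C ^ 2 < A ^ 2 := by nlinarith
        calc C ^ 2 < A ^ 2 := this
          _ = a * A ^ 2 + b * B ^ 2 := by linear_combination b * (A + B) * hAB - A ^ 2 * hab
      · have hle : C ≤ a * A + b * B := by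
          calc C ≤ ‖a • (x - u)‖ + ‖b • (y - u)‖ := norm_add_le _ _
            _ = a * A + b * B := by
                rw [norm_smul, norm_smul, Real.norm_eq_abs, Real.norm_eq_abs,
                  abs_of_pos ha, abs_of_pos hb]
        have hABne : A - B ≠ 0 := sub_ne_zero.mpr hAB
        have h2 : 0 < (A - B) ^ 2 :=
          lt_of_le_of_ne (sq_nonneg _) (Ne.symm (pow_ne_zero 2 hABne))
        nlinarith [mul_self_le_mul_self hCnn hle, mul_pos (mul_pos ha hb) h2,
          sq_nonneg (A - B)]
    nlinarith [mul_lt_mul_of_pos_left key hωu]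
  · -- differentiability
    refine ⟨fun v => (2 * ω u * ‖v - u‖) • p' (v - u), ?_, fun v _ _ => rfl, ?_⟩
    · intro v hv w hw
      by_cases hvu : v = u
      · subst hvu
        have h0 : ((2 * ω v * ‖v - v‖) • p' (v - v)) (w - v) = 0 := by
          simp [sub_self]
        rw [h0]
        have heq : ∀ t ∈ Set.Ioi (0 : ℝ),
            (ω v * ‖v + t • (w - v) - v‖ ^ 2 - ω v * ‖v - v‖ ^ 2) / t
              = ω v * ‖w - v‖ ^ 2 * t := by
          intro t ht
          have ht' : (0 : ℝ) < t := ht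
          have hsimp : v + t • (w - v) - v = t • (w - v) := by abel
          rw [hsimp, norm_smul, Real.norm_eq_abs, abs_of_pos ht']
          field_simp
          simp
        have hlim : Tendsto (fun t : ℝ => ω v * ‖w - v‖ ^ 2 * t) (𝓝[>] 0) (𝓝 0) := by
          have hc : Continuous fun t : ℝ => ω v * ‖w - v‖ ^ 2 * t := by continuity
          have := (hc.tendsto 0).mono_left
            (nhdsWithin_le_nhds (s := Set.Ioi (0 : ℝ)))
          simpa using this
        exact Tendsto.congr' (eventuallyEq_nhdsWithin_of_eqOn heq).symm hlim
      · show Tendsto _ (𝓝[>] 0) (𝓝 (((2 * ω u * ‖v - u‖) • p' (v - u)) (w - v)))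
        set x := v - u with hx
        have hx0 : x ≠ 0 := sub_ne_zero.mpr hvu
        set h := w - v with hh
        have heq : ∀ t ∈ Set.Ioi (0 : ℝ),
            (ω u * ‖v + t • h - u‖ ^ 2 - ω u * ‖x‖ ^ 2) / t
              = ω u * ((‖x + t • h‖ + ‖x‖) * ((‖x + t • h‖ - ‖x‖) / t)) := by
          intro t ht
          have ht' : (0 : ℝ) < t := ht
          have hxe : v + t • h - u = x + t • h := by rw [hx]; abel
          rw [hxe]
          field_simp
          ring
        have hn : Tendsto (fun t : ℝ => ‖x + t • h‖) (𝓝[>] 0) (𝓝 ‖x‖) := by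
          have hc : Tendsto (fun t : ℝ => x + t • h) (𝓝 0) (𝓝 x) := by
            have hcont : Continuous (fun t : ℝ => x + t • h) := by continuity
            simpa using hcont.tendsto 0
          exact hc.norm.mono_left nhdsWithin_le_nhds
        have hlim : Tendsto (fun t : ℝ =>
            ω u * ((‖x + t • h‖ + ‖x‖) * ((‖x + t • h‖ - ‖x‖) / t))) (𝓝[>] 0)
            (𝓝 (ω u * ((‖x‖ + ‖x‖) * p' x h))) :=
          ((hn.add tendsto_const_nhds).mul (hp' x hx0 h)).const_mul _
        have hval : ((2 * ω u * ‖x‖) • p' x) h = ω u * ((‖x‖ + ‖x‖) * p' x h) := by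
          simp [ContinuousLinearMap.smul_apply]; ring
        rw [hval]
        exact Tendsto.congr' (eventuallyEq_nhdsWithin_of_eqOn heq).symm hlim
    · ext y
      simp [sub_self]
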